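/- Let Λ be a unimodular symmetric bilinear form on a finitely generated free ℤ-module H, and let L be a direct summand of H of rank equal to half the rank of H with Λ(x,y) = 0 for all x, y ∈ L. Then L equals its own orthogonal complement: L = {v ∈ H : Λ(v, x) = 0 for all x ∈ L}. -/

import Mathlib

/-- `L` is a Lagrangian for the bilinear form `Λ`: a direct summand on which `Λ`
vanishes identically and whose rank is half the rank of the ambient module. -/
def IsLagrangian {H : Type*} [AddCommGroup H] [Module ℤ H]
    (Λ : H →ₗ[ℤ] H →ₗ[ℤ] ℤ) (L : Submodule ℤ H) : Prop :=
  (∃ L' : Submodule ℤ H, IsCompl L L') ∧ (∀ x ∈ L, ∀ y ∈ L, Λ x y = 0) ∧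
    2 * Module.finrank ℤ L = Module.finrank ℤ H

/-- Any two `ℤ`-module structures give the same finrank. -/
lemma finrank_int_eq_aux {M : Type*} [AddCommGroup M] (m₁ m₂ : Module ℤ M) :
    @Module.finrank ℤ M _ _ m₁ = @Module.finrank ℤ M _ _ m₂ := by
  have h : m₁ = m₂ :=
    (AddCommGroup.uniqueIntModule.uniq m₁).trans
      (AddCommGroup.uniqueIntModule.uniq m₂).symm
  rw [h]

/-- Generic version over a PID. -/
theorem stmt9_aux {R H : Type*} [CommRing R] [IsDomain R] [IsPrincipalIdealRing R]
    [AddCommGroup H] [Module R H]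
    [Module.Free R H] [Module.Finite R H]
    (Λ : H →ₗ[R] H →ₗ[R] R)
    (hunimod : Function.Surjective fun x : H => Λ x)
    (L : Submodule R H)
    (hsummand : ∃ L' : Submodule R H, IsCompl L L')
    (hiso : ∀ x ∈ L, ∀ y ∈ L, Λ x y = 0)
    (hrank : 2 * Module.finrank R L = Module.finrank R H) :
    ∀ v : H, v ∈ L ↔ ∀ x ∈ L, Λ v x = 0 := by
  classical
  obtain ⟨L', hcompl⟩ := hsummand
  haveI : IsNoetherian R H := isNoetherian_of_isNoetherianRing_of_finite R H
  haveI : Module.Finite R L := Module.Finite.iff_fg.mpr (IsNoetherian.noetherian L)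
  -- the map to the dual of L
  set φ : H →ₗ[R] Module.Dual R ↥L := L.subtype.dualMap.comp Λ with hφdef
  have hφ_apply : ∀ (v : H) (x : L), φ v x = Λ v x := fun v x => rfl
  have hφ_surj : Function.Surjective φ := by
    intro g
    obtain ⟨w, hw⟩ := hunimod (g.comp (L.linearProjOfIsCompl L' hcompl))
    refine ⟨w, ?_⟩
    ext x
    have hww : Λ w = g.comp (L.linearProjOfIsCompl L' hcompl) := hw
    rw [hφ_apply, hww]
    exact congrArg g (Submodule.projectionOnto_apply_left hcompl x)
  set K := LinearMap.ker φ with hKdef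
  have hKmem : ∀ v : H, v ∈ K ↔ ∀ x ∈ L, Λ v x = 0 := by
    intro v
    constructor
    · intro hv x hx
      have h0 : φ v = 0 := hv
      have := congrArg (fun f => f ⟨x, hx⟩) h0
      simpa [hφ_apply] using this
    · intro hv
      show φ v = 0
      ext x
      exact hv x x.2
  have hLK : L ≤ K := fun v hv => (hKmem v).2 (fun x hx => hiso v hv x hx)
  haveI : Module.Finite R K := Module.Finite.iff_fg.mpr (IsNoetherian.noetherian K)
  -- finrank of the dual of L equals finrank of L
  have hdual : Module.finrank R (Module.Dual R ↥L) = Module.finrank R ↥L := by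
    let b := Module.Free.chooseBasis R ↥L
    rw [Module.finrank_eq_card_basis b.dualBasis, Module.finrank_eq_card_basis b]
  haveI : Module.Finite R (Module.Dual R ↥L) := Module.Finite.of_basis
    (Module.Free.chooseBasis R ↥L).dualBasis
  -- rank-nullity for φ
  have h1 : Module.finrank R (Module.Dual R ↥L) + Module.finrank R K
      = Module.finrank R H := by
    have h := LinearMap.lift_rank_range_add_rank_ker φ
    rw [LinearMap.range_eq_top.2 hφ_surj, rank_top] at h
    simp only [← Module.finrank_eq_rank, Cardinal.lift_natCast, ← Nat.cast_add,
      Nat.cast_inj] at h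
    exact h
  have hKrank : Module.finrank R K = Module.finrank R L := by
    rw [hdual] at h1; omega
  -- now show K ≤ L using the quotient
  haveI : Module.Free R (H ⧸ L) :=
    Module.Free.of_equiv (Submodule.quotientEquivOfIsCompl L L' hcompl).symm
  set ψ : K →ₗ[R] H ⧸ L := L.mkQ.comp K.subtype with hψdef
  have hkerψ : LinearMap.ker ψ = L.comap K.subtype := by
    ext x
    simp [hψdef, Submodule.Quotient.mk_eq_zero]
  have hkerrank : Module.finrank R (LinearMap.ker ψ) = Module.finrank R L := by
    rw [hkerψ]
    exact LinearEquiv.finrank_eq (Submodule.comapSubtypeEquivOfLe hLK)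
  haveI : IsNoetherian R (H ⧸ L) := isNoetherian_of_isNoetherianRing_of_finite R (H ⧸ L)
  haveI : Module.Finite R ↥(LinearMap.range ψ) :=
    Module.Finite.iff_fg.mpr (IsNoetherian.noetherian (LinearMap.range ψ))
  have h2 : Module.finrank R (LinearMap.range ψ)
      + Module.finrank R (LinearMap.ker ψ) = Module.finrank R K := by
    have h := LinearMap.rank_range_add_rank_ker (R := R) ψ
    rw [← Module.finrank_eq_rank, ← Module.finrank_eq_rank, ← Module.finrank_eq_rank,
      ← Nat.cast_add, Nat.cast_inj] at h
    exact h
  have hrange : LinearMap.range ψ = ⊥ := by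
    rw [← Submodule.finrank_eq_zero (R := R) (S := LinearMap.range ψ)]
    omega
  have hKL : K ≤ L := by
    intro v hv
    have hmem : ψ ⟨v, hv⟩ ∈ LinearMap.range ψ := LinearMap.mem_range_self ψ _
    rw [hrange, Submodule.mem_bot] at hmem
    have h0 : L.mkQ v = 0 := hmem
    rwa [← Submodule.Quotient.mk_eq_zero]
  intro v
  rw [← hKmem v]
  exact ⟨fun h => hLK h, fun h => hKL h⟩

theorem stmt9 {H : Type*} [AddCommGroup H] [Module ℤ H]
    [Module.Free ℤ H] [Module.Finite ℤ H]
    (Λ : H →ₗ[ℤ] H →ₗ[ℤ] ℤ)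
    (hsymm : ∀ x y, Λ x y = Λ y x)
    (hunimod : Function.Bijective fun x : H => Λ x)
    (L : Submodule ℤ H)
    (hsummand : ∃ L' : Submodule ℤ H, IsCompl L L')
    (hiso : ∀ x ∈ L, ∀ y ∈ L, Λ x y = 0)
    (hrank : 2 * Module.finrank ℤ L = Module.finrank ℤ H) :
    ∀ v : H, v ∈ L ↔ ∀ x ∈ L, Λ v x = 0 := by
  have hrank' : 2 * @Module.finrank ℤ ↥L _ _ L.module = Module.finrank ℤ H := by
    rw [finrank_int_eq_aux L.module (AddCommGroup.toIntModule ↥L)]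
    exact hrank
  exact stmt9_aux Λ hunimod.2 L hsummand hiso hrank'
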